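/- Traversal-order lemma: let g ≥ 2, d ≥ 2, p ≥ 2, n = g+p+d, and let d_1,…,d_{2n} be an embroidery of E_{g,p,d} in which the superior diagonal of the top-left cell G_1 is stitched at index 2. Then for every 1 ≤ i ≤ 2g the diagonal d_i is a diagonal of a left-staircase cell G_k; for every 2g+1 ≤ i ≤ 2(g+p) it is a diagonal of a landing cell P_j; and for every 2(g+p)+1 ≤ i ≤ 2n it is a diagonal of a right-staircase cell D_k. -/
import Mathlib


/-- Two vertices of `ℤ²` are adjacent if their Euclidean distance is `1`. -/
def Adj (u v : ℤ × ℤ) : Prop := (u.1 - v.1) ^ 2 + (u.2 - v.2) ^ 2 = 1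

/-- The inferior diagonal of the cell `(a, b)`: the unordered pair `{(a,b), (a+1,b+1)}`. -/
def infDiag (c : ℤ × ℤ) : Sym2 (ℤ × ℤ) := s(c, (c.1 + 1, c.2 + 1))

/-- The superior diagonal of the cell `(a, b)`: the unordered pair `{(a,b+1), (a+1,b)}`. -/
def supDiag (c : ℤ × ℤ) : Sym2 (ℤ × ℤ) := s((c.1, c.2 + 1), (c.1 + 1, c.2))

/-- The unordered pair underlying an ordered pair of vertices. -/
def diagOf (e : (ℤ × ℤ) × (ℤ × ℤ)) : Sym2 (ℤ × ℤ) := s(e.1, e.2)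

/-- `d 0, d 1, …, d (2n - 1)` (with `n = C.card`) is an embroidery of the
configuration `C`. -/
def IsEmbroidery (C : Finset (ℤ × ℤ)) (d : ℕ → (ℤ × ℤ) × (ℤ × ℤ)) : Prop :=
  (∀ i < 2 * C.card, ∃ c ∈ C, diagOf (d i) = infDiag c ∨ diagOf (d i) = supDiag c) ∧
  (∀ c ∈ C, ∃! i, i < 2 * C.card ∧ diagOf (d i) = infDiag c) ∧
  (∀ c ∈ C, ∃! i, i < 2 * C.card ∧ diagOf (d i) = supDiag c) ∧
  (∀ c ∈ C, ∀ i j, i < 2 * C.card → j < 2 * C.card →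
    diagOf (d i) = infDiag c → diagOf (d j) = supDiag c → i < j) ∧
  (∀ i, i + 1 < 2 * C.card → Adj (d i).2 (d (i + 1)).1)

/-- A closed embroidery: moreover the end of the last diagonal is adjacent to the
start of the first one. -/
def IsClosedEmbroidery (C : Finset (ℤ × ℤ)) (d : ℕ → (ℤ × ℤ) × (ℤ × ℤ)) : Prop :=
  IsEmbroidery C d ∧ Adj (d (2 * C.card - 1)).2 (d 0).1

/-- A configuration is brodable if it admits an embroidery. -/
def Brodable (C : Finset (ℤ × ℤ)) : Prop := ∃ d, IsEmbroidery C d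

/-- A configuration is strongly brodable if it admits a closed embroidery. -/
def StronglyBrodable (C : Finset (ℤ × ℤ)) : Prop := ∃ d, IsClosedEmbroidery C d

/-- The staircase with landing `E_{g,p,d}`:
`{(i, −i) : 0 ≤ i ≤ g−1} ∪ {(g−1+j, −g) : 1 ≤ j ≤ p} ∪ {(g+p+k−1, −g−k) : 1 ≤ k ≤ d}`. -/
def stairLanding (g p d : ℕ) : Finset (ℤ × ℤ) :=
  (Finset.range g).image (fun i : ℕ => ((i : ℤ), -(i : ℤ))) ∪
  (Finset.range p).image (fun j : ℕ => ((g : ℤ) + j, -(g : ℤ))) ∪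
  (Finset.range d).image (fun k : ℕ => ((g : ℤ) + p + k, -(g : ℤ) - 1 - k))

/-- `e` traverses a diagonal of the cell `c`. -/
def IsDiagOf (e : (ℤ × ℤ) × (ℤ × ℤ)) (c : ℤ × ℤ) : Prop :=
  diagOf e = infDiag c ∨ diagOf e = supDiag c

/-! ### Auxiliary lemmas -/

lemma int_sq_cases (a b : ℤ) (h : a^2 + b^2 = 1) :
    (a = 0 ∧ (b = 1 ∨ b = -1)) ∨ (b = 0 ∧ (a = 1 ∨ a = -1)) := by
  have h1 : -1 ≤ a ∧ a ≤ 1 := by constructor <;> nlinarith [sq_nonneg b, sq_nonneg a]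
  have h2 : -1 ≤ b ∧ b ≤ 1 := by constructor <;> nlinarith [sq_nonneg b, sq_nonneg a]
  obtain ⟨h1a, h1b⟩ := h1
  obtain ⟨h2a, h2b⟩ := h2
  interval_cases a <;> interval_cases b <;> omega

lemma adj_cases {u v : ℤ × ℤ} (h : Adj u v) :
    (u.1 = v.1 ∧ (u.2 = v.2 + 1 ∨ u.2 = v.2 - 1)) ∨
    (u.2 = v.2 ∧ (u.1 = v.1 + 1 ∨ u.1 = v.1 - 1)) := by
  have := int_sq_cases _ _ h
  omega

lemma endpoints_of_inf {e : (ℤ × ℤ) × (ℤ × ℤ)} {c : ℤ × ℤ} (h : diagOf e = infDiag c) :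
    (e.1 = (c.1, c.2) ∧ e.2 = (c.1 + 1, c.2 + 1)) ∨
    (e.1 = (c.1 + 1, c.2 + 1) ∧ e.2 = (c.1, c.2)) := by
  unfold diagOf infDiag at h
  rw [Sym2.eq_iff] at h
  rcases h with ⟨h1, h2⟩ | ⟨h1, h2⟩
  · left; exact ⟨by simp [h1], h2⟩
  · right; exact ⟨h1, by simp [h2]⟩

lemma endpoints_of_sup {e : (ℤ × ℤ) × (ℤ × ℤ)} {c : ℤ × ℤ} (h : diagOf e = supDiag c) :
    (e.1 = (c.1, c.2 + 1) ∧ e.2 = (c.1 + 1, c.2)) ∨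
    (e.1 = (c.1 + 1, c.2) ∧ e.2 = (c.1, c.2 + 1)) := by
  unfold diagOf supDiag at h
  rw [Sym2.eq_iff] at h
  tauto

lemma inf_ne_sup {c c' : ℤ × ℤ} : infDiag c ≠ supDiag c' := by
  unfold infDiag supDiag
  rw [Ne, Sym2.eq_iff, Prod.ext_iff, Prod.ext_iff, Prod.ext_iff, Prod.ext_iff]
  push_neg
  simp only [Prod.fst, Prod.snd]
  constructor <;> intro h1 h2 <;> omega

lemma inf_inj {c c' : ℤ × ℤ} (h : infDiag c = infDiag c') : c = c' := by
  unfold infDiag at h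
  rw [Sym2.eq_iff, Prod.ext_iff, Prod.ext_iff, Prod.ext_iff, Prod.ext_iff] at h
  rw [Prod.ext_iff]
  omega

lemma sup_inj {c c' : ℤ × ℤ} (h : supDiag c = supDiag c') : c = c' := by
  unfold supDiag at h
  rw [Sym2.eq_iff, Prod.ext_iff, Prod.ext_iff, Prod.ext_iff, Prod.ext_iff] at h
  rw [Prod.ext_iff]
  omega

lemma diag_cell_eq {e : (ℤ × ℤ) × (ℤ × ℤ)} {c c' : ℤ × ℤ}
    (h : IsDiagOf e c) (h' : IsDiagOf e c') : c = c' := by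
  rcases h with h | h <;> rcases h' with h' | h'
  · exact inf_inj (h ▸ h')
  · exact absurd (h ▸ h') inf_ne_sup
  · exact absurd (h ▸ h').symm inf_ne_sup
  · exact sup_inj (h ▸ h')

lemma snd_corner {e : (ℤ × ℤ) × (ℤ × ℤ)} {x y : ℤ} (h : IsDiagOf e (x, y)) :
    ∃ a b : ℤ, (a = 0 ∨ a = 1) ∧ (b = 0 ∨ b = 1) ∧ e.2 = (x + a, y + b) ∧
      ((diagOf e = infDiag (x, y) ∧ a = b) ∨ (diagOf e = supDiag (x, y) ∧ a + b = 1)) := by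
  rcases h with h | h
  · rcases endpoints_of_inf h with ⟨_, h2⟩ | ⟨_, h2⟩
    · exact ⟨1, 1, by tauto, by tauto, h2, Or.inl ⟨h, rfl⟩⟩
    · exact ⟨0, 0, by tauto, by tauto, by simpa using h2, Or.inl ⟨h, rfl⟩⟩
  · rcases endpoints_of_sup h with ⟨_, h2⟩ | ⟨_, h2⟩
    · exact ⟨1, 0, by tauto, by tauto, by simpa using h2, Or.inr ⟨h, rfl⟩⟩
    · exact ⟨0, 1, by tauto, by tauto, by simpa using h2, Or.inr ⟨h, rfl⟩⟩

lemma fst_corner {e : (ℤ × ℤ) × (ℤ × ℤ)} {x y : ℤ} (h : IsDiagOf e (x, y)) :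
    ∃ a b : ℤ, (a = 0 ∨ a = 1) ∧ (b = 0 ∨ b = 1) ∧ e.1 = (x + a, y + b) ∧
      ((diagOf e = infDiag (x, y) ∧ a = b) ∨ (diagOf e = supDiag (x, y) ∧ a + b = 1)) := by
  rcases h with h | h
  · rcases endpoints_of_inf h with ⟨h1, _⟩ | ⟨h1, _⟩
    · exact ⟨0, 0, by tauto, by tauto, by simpa using h1, Or.inl ⟨h, rfl⟩⟩
    · exact ⟨1, 1, by tauto, by tauto, h1, Or.inl ⟨h, rfl⟩⟩
  · rcases endpoints_of_sup h with ⟨h1, _⟩ | ⟨h1, _⟩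
    · exact ⟨0, 1, by tauto, by tauto, by simpa using h1, Or.inr ⟨h, rfl⟩⟩
    · exact ⟨1, 0, by tauto, by tauto, by simpa using h1, Or.inr ⟨h, rfl⟩⟩

lemma mem_stair {g p d : ℕ} {c : ℤ × ℤ} : c ∈ stairLanding g p d ↔
    (∃ k < g, c = ((k : ℤ), -(k : ℤ))) ∨ (∃ j < p, c = ((g : ℤ) + j, -(g : ℤ))) ∨
    (∃ k < d, c = ((g : ℤ) + p + k, -(g : ℤ) - 1 - k)) := by
  simp only [stairLanding, Finset.mem_union, Finset.mem_image, Finset.mem_range]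
  constructor
  · rintro ((⟨k, hk, rfl⟩ | ⟨j, hj, rfl⟩) | ⟨k, hk, rfl⟩)
    · exact Or.inl ⟨k, hk, rfl⟩
    · exact Or.inr (Or.inl ⟨j, hj, rfl⟩)
    · exact Or.inr (Or.inr ⟨k, hk, rfl⟩)
  · rintro (⟨k, hk, rfl⟩ | ⟨j, hj, rfl⟩ | ⟨k, hk, rfl⟩)
    · exact Or.inl (Or.inl ⟨k, hk, rfl⟩)
    · exact Or.inl (Or.inr ⟨j, hj, rfl⟩)
    · exact Or.inr ⟨k, hk, rfl⟩

lemma stair_card (g p d : ℕ) : (stairLanding g p d).card = g + p + d := by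
  have h : stairLanding g p d = (Finset.range (g + p + d)).image
      (fun m : ℕ => ((m : ℤ), if m < g then -(m : ℤ) else if m < g + p then -(g : ℤ)
        else (p : ℤ) - 1 - (m : ℤ))) := by
    ext c
    rw [mem_stair]
    simp only [Finset.mem_image, Finset.mem_range]
    constructor
    · rintro (⟨k, hk, rfl⟩ | ⟨j, hj, rfl⟩ | ⟨k, hk, rfl⟩)
      · exact ⟨k, by omega, by simp [hk]⟩
      · refine ⟨g + j, by omega, ?_⟩
        have h1 : ¬ (g + j < g) := by omega
        have h2 : g + j < g + p := by omega
        simp [h1, h2]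
      · refine ⟨g + p + k, by omega, ?_⟩
        have h1 : ¬ (g + p + k < g) := by omega
        have h2 : ¬ (g + p + k < g + p) := by omega
        simp only [h1, h2, if_false]
        rw [Prod.ext_iff]
        push_cast
        constructor <;> ring
    · rintro ⟨m, hm, rfl⟩
      by_cases h1 : m < g
      · exact Or.inl ⟨m, h1, by simp [h1]⟩
      · by_cases h2 : m < g + p
        · refine Or.inr (Or.inl ⟨m - g, by omega, ?_⟩)
          simp only [h1, h2, if_false, if_true]
          rw [Prod.ext_iff]
          exact ⟨by omega, rfl⟩
        · refine Or.inr (Or.inr ⟨m - g - p, by omega, ?_⟩)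
          simp only [h1, h2, if_false]
          rw [Prod.ext_iff]
          constructor <;> omega
  rw [h, Finset.card_image_of_injOn, Finset.card_range]
  intro m _ m' _ hmm
  have := congrArg Prod.fst hmm
  simpa using this

/-! ### Geometry lemmas -/

lemma geo_GD {g p d : ℕ} (hp : 2 ≤ p) {k k2 : ℕ} (hk : k < g) (hk2 : k2 < d)
    {a1 b1 a2 b2 : ℤ} (ha1 : a1 = 0 ∨ a1 = 1) (hb1 : b1 = 0 ∨ b1 = 1)
    (ha2 : a2 = 0 ∨ a2 = 1) (hb2 : b2 = 0 ∨ b2 = 1)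
    (hadj : Adj ((k : ℤ) + a1, -(k : ℤ) + b1)
      ((g : ℤ) + (p : ℤ) + (k2 : ℤ) + a2, -(g : ℤ) - 1 - (k2 : ℤ) + b2)) : False := by
  have h := adj_cases hadj
  simp only [Prod.fst, Prod.snd] at h
  omega

lemma geo_GP {g p : ℕ} {k j : ℕ} (hk : k < g) (hj : j < p)
    {a1 b1 a2 b2 : ℤ} (ha1 : a1 = 0 ∨ a1 = 1) (hb1 : b1 = 0 ∨ b1 = 1)
    (ha2 : a2 = 0 ∨ a2 = 1) (hb2 : b2 = 0 ∨ b2 = 1)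
    (hadj : Adj ((k : ℤ) + a1, -(k : ℤ) + b1) ((g : ℤ) + (j : ℤ) + a2, -(g : ℤ) + b2)) :
    ((k : ℤ) = (g : ℤ) - 1 ∧ a1 = 1 ∧ b1 = 0 ∧ (j : ℤ) = 0 ∧ a2 = b2) ∨
    ((j : ℤ) = 0 ∧ a2 = 0 ∧ b2 = 1) ∨
    ((j : ℤ) = 1 ∧ a2 = 0 ∧ b2 = 1 ∧ (k : ℤ) = (g : ℤ) - 1 ∧ a1 = 1 ∧ b1 = 0) := by
  have h := adj_cases hadj
  simp only [Prod.fst, Prod.snd] at h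
  omega

lemma geo_PG {g p : ℕ} {j k : ℕ} (hj : j < p) (hk : k < g)
    {a1 b1 a2 b2 : ℤ} (ha1 : a1 = 0 ∨ a1 = 1) (hb1 : b1 = 0 ∨ b1 = 1)
    (ha2 : a2 = 0 ∨ a2 = 1) (hb2 : b2 = 0 ∨ b2 = 1)
    (hadj : Adj ((g : ℤ) + (j : ℤ) + a1, -(g : ℤ) + b1) ((k : ℤ) + a2, -(k : ℤ) + b2)) :
    (k : ℤ) = (g : ℤ) - 1 := by
  have h := adj_cases hadj
  simp only [Prod.fst, Prod.snd] at h
  omega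

lemma geo_PD {g p d : ℕ} {j k : ℕ} (hj : j < p) (hk : k < d)
    {a1 b1 a2 b2 : ℤ} (ha1 : a1 = 0 ∨ a1 = 1) (hb1 : b1 = 0 ∨ b1 = 1)
    (ha2 : a2 = 0 ∨ a2 = 1) (hb2 : b2 = 0 ∨ b2 = 1)
    (hadj : Adj ((g : ℤ) + (j : ℤ) + a1, -(g : ℤ) + b1)
      ((g : ℤ) + (p : ℤ) + (k : ℤ) + a2, -(g : ℤ) - 1 - (k : ℤ) + b2)) :
    ((j : ℤ) + 1 = (p : ℤ) ∧ a1 = 1 ∧ b1 = 0 ∧ (k : ℤ) = 0 ∧ a2 = b2) ∨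
    ((k : ℤ) = 0 ∧ a2 = 0 ∧ b2 = 1) := by
  have h := adj_cases hadj
  simp only [Prod.fst, Prod.snd] at h
  omega

lemma geo_DP {g p d : ℕ} {k j : ℕ} (hk : k < d) (hj : j < p)
    {a1 b1 a2 b2 : ℤ} (ha1 : a1 = 0 ∨ a1 = 1) (hb1 : b1 = 0 ∨ b1 = 1)
    (ha2 : a2 = 0 ∨ a2 = 1) (hb2 : b2 = 0 ∨ b2 = 1)
    (hadj : Adj ((g : ℤ) + (p : ℤ) + (k : ℤ) + a1, -(g : ℤ) - 1 - (k : ℤ) + b1)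
      ((g : ℤ) + (j : ℤ) + a2, -(g : ℤ) + b2)) :
    ((k : ℤ) = 0 ∧ a1 = 0 ∧ b1 = 1) ∨
    ((j : ℤ) + 1 = (p : ℤ) ∧ a2 = 1 ∧ b2 = 0 ∧ (k : ℤ) = 0 ∧ a1 = b1) := by
  have h := adj_cases hadj
  simp only [Prod.fst, Prod.snd] at h
  omega

lemma geo_DD {g p d : ℕ} {k2 : ℕ} (hk2 : k2 < d)
    {a1 b1 a2 b2 : ℤ} (ha1 : a1 = 0 ∨ a1 = 1) (hb1 : b1 = 0 ∨ b1 = 1)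
    (hab1 : a1 = b1)
    (ha2 : a2 = 0 ∨ a2 = 1) (hb2 : b2 = 0 ∨ b2 = 1)
    (hadj : Adj ((g : ℤ) + (p : ℤ) + a1, -(g : ℤ) - 1 + b1)
      ((g : ℤ) + (p : ℤ) + (k2 : ℤ) + a2, -(g : ℤ) - 1 - (k2 : ℤ) + b2)) :
    ((k2 : ℤ) = 0 ∧ a2 + b2 = 1) ∨ ((k2 : ℤ) = 1 ∧ a2 = 0 ∧ b2 = 1) := by
  have h := adj_cases hadj
  simp only [Prod.fst, Prod.snd] at h
  omega

lemma adj_symm {u v : ℤ × ℤ} (h : Adj u v) : Adj v u := by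
  unfold Adj at h ⊢
  linear_combination h

/-- Traversal-order lemma.  Let `g, p, d ≥ 2`, `n = g + p + d`, and let
`d' 0, …, d' (2n-1)` be an embroidery of `E_{g,p,d}` in which the superior diagonal of
the top-left cell `G₁ = (0, 0)` is stitched at (0-based) index `1` (1-based index `2`).
Then the first `2g` diagonals belong to left-staircase cells, the next `2p` to landing
cells, and the last `2d` to right-staircase cells. -/
theorem stairLanding_traversal_order (g p d : ℕ) (hg : 2 ≤ g) (hp : 2 ≤ p) (hd : 2 ≤ d)
    (d' : ℕ → (ℤ × ℤ) × (ℤ × ℤ)) (hemb : IsEmbroidery (stairLanding g p d) d')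
    (hstart : diagOf (d' 1) = supDiag ((0 : ℤ), (0 : ℤ))) :
    (∀ i < 2 * g, ∃ k < g, IsDiagOf (d' i) ((k : ℤ), -(k : ℤ))) ∧
    (∀ i, 2 * g ≤ i → i < 2 * (g + p) →
      ∃ j < p, IsDiagOf (d' i) ((g : ℤ) + j, -(g : ℤ))) ∧
    (∀ i, 2 * (g + p) ≤ i → i < 2 * (g + p + d) →
      ∃ k < d, IsDiagOf (d' i) ((g : ℤ) + p + k, -(g : ℤ) - 1 - k)) := by
  classical
  obtain ⟨h1, h2, h3, h4, h5⟩ := hemb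
  rw [stair_card] at h1 h2 h3 h4 h5
  set N := 2 * (g + p + d) with hNdef
  have memG : ∀ k : ℕ, k < g → ((k : ℤ), -(k : ℤ)) ∈ stairLanding g p d :=
    fun k hk => mem_stair.mpr (Or.inl ⟨k, hk, rfl⟩)
  have memP : ∀ j : ℕ, j < p → ((g : ℤ) + (j : ℤ), -(g : ℤ)) ∈ stairLanding g p d :=
    fun j hj => mem_stair.mpr (Or.inr (Or.inl ⟨j, hj, rfl⟩))
  have memD : ∀ k : ℕ, k < d →
      ((g : ℤ) + (p : ℤ) + (k : ℤ), -(g : ℤ) - 1 - (k : ℤ)) ∈ stairLanding g p d :=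
    fun k hk => mem_stair.mpr (Or.inr (Or.inr ⟨k, hk, rfl⟩))
  have mem00 : ((0 : ℤ), (0 : ℤ)) ∈ stairLanding g p d := by
    have := memG 0 (by omega); simpa using this
  have memGg : ((g : ℤ) - 1, 1 - (g : ℤ)) ∈ stairLanding g p d :=
    mem_stair.mpr (Or.inl ⟨g - 1, by omega, by rw [Prod.mk.injEq]; omega⟩)
  have memP1 : ((g : ℤ), -(g : ℤ)) ∈ stairLanding g p d :=
    mem_stair.mpr (Or.inr (Or.inl ⟨0, by omega, by rw [Prod.mk.injEq]; omega⟩))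
  have memP2 : ((g : ℤ) + 1, -(g : ℤ)) ∈ stairLanding g p d :=
    mem_stair.mpr (Or.inr (Or.inl ⟨1, by omega, by rw [Prod.mk.injEq]; omega⟩))
  have memPp : ((g : ℤ) + (p : ℤ) - 1, -(g : ℤ)) ∈ stairLanding g p d :=
    mem_stair.mpr (Or.inr (Or.inl ⟨p - 1, by omega, by rw [Prod.mk.injEq]; omega⟩))
  have memD1 : ((g : ℤ) + (p : ℤ), -(g : ℤ) - 1) ∈ stairLanding g p d :=
    mem_stair.mpr (Or.inr (Or.inr ⟨0, by omega, by rw [Prod.mk.injEq]; omega⟩))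
  have memD2 : ((g : ℤ) + (p : ℤ) + 1, -(g : ℤ) - 2) ∈ stairLanding g p d :=
    mem_stair.mpr (Or.inr (Or.inr ⟨1, by omega, by rw [Prod.mk.injEq]; omega⟩))
  have uInf : ∀ c ∈ stairLanding g p d, ∀ i i' : ℕ, i < N → i' < N →
      diagOf (d' i) = infDiag c → diagOf (d' i') = infDiag c → i = i' := by
    intro c hc i i' hi hi' hdi hdi'
    obtain ⟨i0, -, hu⟩ := h2 c hc
    rw [hu i ⟨hi, hdi⟩, hu i' ⟨hi', hdi'⟩]
  have uSup : ∀ c ∈ stairLanding g p d, ∀ i i' : ℕ, i < N → i' < N →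
      diagOf (d' i) = supDiag c → diagOf (d' i') = supDiag c → i = i' := by
    intro c hc i i' hi hi' hdi hdi'
    obtain ⟨i0, -, hu⟩ := h3 c hc
    rw [hu i ⟨hi, hdi⟩, hu i' ⟨hi', hdi'⟩]
  have exInf : ∀ c ∈ stairLanding g p d, ∃ i, i < N ∧ diagOf (d' i) = infDiag c :=
    fun c hc => (h2 c hc).exists
  have exSup : ∀ c ∈ stairLanding g p d, ∃ i, i < N ∧ diagOf (d' i) = supDiag c :=
    fun c hc => (h3 c hc).exists
  have h0 : diagOf (d' 0) = infDiag ((0 : ℤ), (0 : ℤ)) := by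
    obtain ⟨i0, hi0N, hi0⟩ := exInf _ mem00
    have hlt := h4 _ mem00 i0 1 hi0N (by omega) hi0 hstart
    have h00 : i0 = 0 := by omega
    rwa [h00] at hi0
  have tri : ∀ i, i < N →
      (∃ k < g, IsDiagOf (d' i) ((k : ℤ), -(k : ℤ))) ∨
      (∃ j < p, IsDiagOf (d' i) ((g : ℤ) + (j : ℤ), -(g : ℤ))) ∨
      (∃ k < d, IsDiagOf (d' i) ((g : ℤ) + (p : ℤ) + (k : ℤ), -(g : ℤ) - 1 - (k : ℤ))) := by
    intro i hi
    obtain ⟨c, hc, hdi⟩ := h1 i hi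
    rcases mem_stair.mp hc with ⟨k, hk, rfl⟩ | ⟨j, hj, rfl⟩ | ⟨k, hk, rfl⟩
    · exact Or.inl ⟨k, hk, hdi⟩
    · exact Or.inr (Or.inl ⟨j, hj, hdi⟩)
    · exact Or.inr (Or.inr ⟨k, hk, hdi⟩)
  -- ==================== G cut ====================
  have hexA : ∃ i, i < N ∧ ¬ ∃ k < g, IsDiagOf (d' i) ((k : ℤ), -(k : ℤ)) := by
    obtain ⟨iP, hiPN, hiPd⟩ := exInf _ memP1
    refine ⟨iP, hiPN, ?_⟩
    rintro ⟨k, hk, hdG⟩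
    have h := diag_cell_eq (Or.inl hiPd) hdG
    rw [Prod.mk.injEq] at h
    omega
  obtain ⟨a, haN, haG, hGbelow⟩ : ∃ a, a < N ∧
      (¬ ∃ k < g, IsDiagOf (d' a) ((k : ℤ), -(k : ℤ))) ∧
      ∀ i, i < a → ∃ k < g, IsDiagOf (d' i) ((k : ℤ), -(k : ℤ)) := by
    refine ⟨Nat.find hexA, (Nat.find_spec hexA).1, (Nat.find_spec hexA).2, ?_⟩
    intro i hia
    by_contra hni
    exact Nat.find_min hexA hia ⟨lt_trans hia (Nat.find_spec hexA).1, hni⟩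
  have ha1 : 0 < a := by
    rcases Nat.eq_zero_or_pos a with h | h
    · exfalso; apply haG; rw [h]
      exact ⟨0, by omega,
        by rw [show (((0:ℕ):ℤ), -((0:ℕ):ℤ)) = ((0:ℤ), (0:ℤ)) by norm_num]; exact Or.inl h0⟩
    · exact h
  obtain ⟨b, rfl⟩ : ∃ b, a = b + 1 := ⟨a - 1, by omega⟩
  have hadjb : Adj (d' b).2 (d' (b + 1)).1 := h5 b (by omega)
  obtain ⟨kb, hkb, hdGb⟩ := hGbelow b (by omega)
  obtain ⟨a1, b1, ha1', hb1', he2b, hty1b⟩ := snd_corner hdGb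
  have hPDb : (∃ j < p, IsDiagOf (d' (b+1)) ((g:ℤ)+(j:ℤ), -(g:ℤ))) ∨
      (∃ k < d, IsDiagOf (d' (b+1)) ((g:ℤ)+(p:ℤ)+(k:ℤ), -(g:ℤ)-1-(k:ℤ))) := by
    rcases tri (b+1) haN with hG | h | h
    · exact absurd hG haG
    · exact Or.inl h
    · exact Or.inr h
  have hkey : diagOf (d' b) = supDiag ((g:ℤ)-1, 1-(g:ℤ)) ∧
      diagOf (d' (b+1)) = infDiag ((g:ℤ), -(g:ℤ)) := by
    rcases hPDb with ⟨j, hj, hdP⟩ | ⟨k2, hk2, hdD⟩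
    swap
    · obtain ⟨a2, b2, ha2', hb2', he1b, -⟩ := fst_corner hdD
      rw [he2b, he1b] at hadjb
      exact absurd hadjb (fun hh => geo_GD hp hkb hk2 ha1' hb1' ha2' hb2' hh)
    · obtain ⟨a2, b2, ha2', hb2', he1b, hty2b⟩ := fst_corner hdP
      rw [he2b, he1b] at hadjb
      rcases geo_GP hkb hj ha1' hb1' ha2' hb2' hadjb with hA | hB | hC
      · obtain ⟨hkg, ha11, hb10, hj0, hab⟩ := hA
        constructor
        · rcases hty1b with ⟨hdd, hee⟩ | ⟨hdd, hee⟩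
          · exfalso; omega
          · rw [show ((kb:ℤ), -(kb:ℤ)) = ((g:ℤ)-1, 1-(g:ℤ)) by rw [Prod.mk.injEq]; omega] at hdd
            exact hdd
        · rcases hty2b with ⟨hdd, hee⟩ | ⟨hdd, hee⟩
          · rw [show ((g:ℤ)+(j:ℤ), -(g:ℤ)) = ((g:ℤ), -(g:ℤ)) by rw [Prod.mk.injEq]; omega] at hdd
            exact hdd
          · exfalso; omega
      · exfalso
        obtain ⟨hj0, ha20, hb21⟩ := hB
        have hdd2 : diagOf (d' (b+1)) = supDiag ((g:ℤ), -(g:ℤ)) := by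
          rcases hty2b with ⟨hdd, hee⟩ | ⟨hdd, hee⟩
          · exfalso; omega
          · rw [show ((g:ℤ)+(j:ℤ), -(g:ℤ)) = ((g:ℤ), -(g:ℤ)) by rw [Prod.mk.injEq]; omega] at hdd
            exact hdd
        obtain ⟨iI, hiIN, hiId⟩ := exInf _ memP1
        have hlt := h4 _ memP1 iI (b+1) hiIN haN hiId hdd2
        obtain ⟨kI, hkI, hdI⟩ := hGbelow iI (by omega)
        have h := diag_cell_eq (Or.inl hiId) hdI
        rw [Prod.mk.injEq] at h
        omega
      · exfalso
        obtain ⟨hj1, ha20, hb21, -, -, -⟩ := hC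
        have hdd2 : diagOf (d' (b+1)) = supDiag ((g:ℤ)+1, -(g:ℤ)) := by
          rcases hty2b with ⟨hdd, hee⟩ | ⟨hdd, hee⟩
          · exfalso; omega
          · rw [show ((g:ℤ)+(j:ℤ), -(g:ℤ)) = ((g:ℤ)+1, -(g:ℤ)) by rw [Prod.mk.injEq]; omega] at hdd
            exact hdd
        obtain ⟨iI, hiIN, hiId⟩ := exInf _ memP2
        have hlt := h4 _ memP2 iI (b+1) hiIN haN hiId hdd2
        obtain ⟨kI, hkI, hdI⟩ := hGbelow iI (by omega)
        have h := diag_cell_eq (Or.inl hiId) hdI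
        rw [Prod.mk.injEq] at h
        omega
  obtain ⟨hGgb, hP1b⟩ := hkey
  have hGabove : ∀ i, b + 1 ≤ i → i < N → ¬ ∃ k < g, IsDiagOf (d' i) ((k:ℤ), -(k:ℤ)) := by
    by_contra hcon
    push_neg at hcon
    obtain ⟨i, hbi, hiN, hGi⟩ := hcon
    have hex2 : ∃ m, b + 1 ≤ m ∧ m < N ∧ ∃ k < g, IsDiagOf (d' m) ((k:ℤ), -(k:ℤ)) :=
      ⟨i, hbi, hiN, hGi⟩
    have hsp := Nat.find_spec hex2
    have hne : Nat.find hex2 ≠ b + 1 := by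
      intro hh
      rw [hh] at hsp
      obtain ⟨-, -, k3, hk3, hdG3⟩ := hsp
      have h := diag_cell_eq (Or.inl hP1b) hdG3
      rw [Prod.mk.injEq] at h
      omega
    obtain ⟨m, hm⟩ : ∃ m, Nat.find hex2 = m + 1 := ⟨Nat.find hex2 - 1, by omega⟩
    rw [hm] at hsp
    obtain ⟨hm0b, hm0N, k3, hk3, hdG3⟩ := hsp
    have hmb : b + 1 ≤ m := by
      have := hne
      rw [hm] at this
      omega
    have hmnotG : ¬ ∃ k < g, IsDiagOf (d' m) ((k:ℤ), -(k:ℤ)) := by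
      intro hGm
      exact Nat.find_min hex2 (by omega) ⟨hmb, by omega, hGm⟩
    have hadjm : Adj (d' m).2 (d' (m+1)).1 := h5 m (by omega)
    obtain ⟨a2, b2, ha2', hb2', he1m, hty3⟩ := fst_corner hdG3
    rcases tri m (by omega) with hGm | ⟨jm, hjm, hdPm⟩ | ⟨km, hkm, hdDm⟩
    · exact hmnotG hGm
    · obtain ⟨a1', b1', ha1'', hb1'', he2m, -⟩ := snd_corner hdPm
      rw [he2m, he1m] at hadjm
      have hkg := geo_PG hjm hk3 ha1'' hb1'' ha2' hb2' hadjm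
      rcases hty3 with ⟨hdd, hee⟩ | ⟨hdd, hee⟩
      · rw [show ((k3:ℤ), -(k3:ℤ)) = ((g:ℤ)-1, 1-(g:ℤ)) by rw [Prod.mk.injEq]; omega] at hdd
        have := h4 _ memGg (m+1) b (by omega) (by omega) hdd hGgb
        omega
      · rw [show ((k3:ℤ), -(k3:ℤ)) = ((g:ℤ)-1, 1-(g:ℤ)) by rw [Prod.mk.injEq]; omega] at hdd
        have := uSup _ memGg (m+1) b (by omega) (by omega) hdd hGgb
        omega
    · obtain ⟨a1', b1', ha1'', hb1'', he2m, -⟩ := snd_corner hdDm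
      rw [he2m, he1m] at hadjm
      exact geo_GD hp hk3 hkm ha2' hb2' ha1'' hb1'' (adj_symm hadjm)
  -- counting for G
  have hcard2g : b + 1 = 2 * g := by
    have hdisj : Disjoint ((Finset.range g).image fun k : ℕ => infDiag ((k:ℤ), -(k:ℤ)))
        ((Finset.range g).image fun k : ℕ => supDiag ((k:ℤ), -(k:ℤ))) := by
      rw [Finset.disjoint_left]
      rintro q hq hq'
      obtain ⟨k, -, rfl⟩ := Finset.mem_image.mp hq
      obtain ⟨k', -, hk'⟩ := Finset.mem_image.mp hq'
      exact inf_ne_sup hk'.symm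
    have hinj1 : Set.InjOn (fun k : ℕ => infDiag ((k:ℤ), -(k:ℤ))) (Finset.range g) := by
      intro x _ y _ hxy
      have h := inf_inj hxy
      rw [Prod.mk.injEq] at h
      omega
    have hinj2 : Set.InjOn (fun k : ℕ => supDiag ((k:ℤ), -(k:ℤ))) (Finset.range g) := by
      intro x _ y _ hxy
      have h := sup_inj hxy
      rw [Prod.mk.injEq] at h
      omega
    have hbij : (Finset.range (b+1)).card =
        (((Finset.range g).image fun k : ℕ => infDiag ((k:ℤ), -(k:ℤ))) ∪
         ((Finset.range g).image fun k : ℕ => supDiag ((k:ℤ), -(k:ℤ)))).card := by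
      apply Finset.card_bij (fun i _ => diagOf (d' i))
      · intro i hi
        rw [Finset.mem_range] at hi
        obtain ⟨k, hk, hdk⟩ := hGbelow i (by omega)
        rcases hdk with hdk | hdk
        · exact Finset.mem_union_left _
            (Finset.mem_image.mpr ⟨k, Finset.mem_range.mpr hk, hdk.symm⟩)
        · exact Finset.mem_union_right _
            (Finset.mem_image.mpr ⟨k, Finset.mem_range.mpr hk, hdk.symm⟩)
      · intro i hi i' hi' hdd
        rw [Finset.mem_range] at hi hi'
        obtain ⟨k, hk, hdk⟩ := hGbelow i (by omega)
        rcases hdk with hdk | hdk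
        · exact uInf _ (memG k hk) i i' (by omega) (by omega) hdk (hdd.symm.trans hdk)
        · exact uSup _ (memG k hk) i i' (by omega) (by omega) hdk (hdd.symm.trans hdk)
      · intro q hq
        rcases Finset.mem_union.mp hq with hq' | hq'
        · obtain ⟨k, hkr, rfl⟩ := Finset.mem_image.mp hq'
          obtain ⟨iq, hiqN, hiqd⟩ := exInf _ (memG k (Finset.mem_range.mp hkr))
          refine ⟨iq, Finset.mem_range.mpr ?_, hiqd⟩
          by_contra hniq
          exact hGabove iq (by omega) hiqN ⟨k, Finset.mem_range.mp hkr, Or.inl hiqd⟩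
        · obtain ⟨k, hkr, rfl⟩ := Finset.mem_image.mp hq'
          obtain ⟨iq, hiqN, hiqd⟩ := exSup _ (memG k (Finset.mem_range.mp hkr))
          refine ⟨iq, Finset.mem_range.mpr ?_, hiqd⟩
          by_contra hniq
          exact hGabove iq (by omega) hiqN ⟨k, Finset.mem_range.mp hkr, Or.inr hiqd⟩
    rw [Finset.card_range, Finset.card_union_of_disjoint hdisj,
      Finset.card_image_of_injOn hinj1, Finset.card_image_of_injOn hinj2,
      Finset.card_range] at hbij
    omega
  -- ==================== D cut ====================
  have entryD : ∀ m, m + 1 < N →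
      (¬ ∃ k < d, IsDiagOf (d' m) ((g:ℤ)+(p:ℤ)+(k:ℤ), -(g:ℤ)-1-(k:ℤ))) →
      (∃ k < d, IsDiagOf (d' (m+1)) ((g:ℤ)+(p:ℤ)+(k:ℤ), -(g:ℤ)-1-(k:ℤ))) →
      (diagOf (d' (m+1)) = infDiag ((g:ℤ)+(p:ℤ), -(g:ℤ)-1) ∧
        diagOf (d' m) = supDiag ((g:ℤ)+(p:ℤ)-1, -(g:ℤ))) ∨
      diagOf (d' (m+1)) = supDiag ((g:ℤ)+(p:ℤ), -(g:ℤ)-1) := by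
    intro m hmN hnDm hDm1
    have hadjm := h5 m hmN
    obtain ⟨k2, hk2, hdD⟩ := hDm1
    obtain ⟨a2, b2, ha2', hb2', he1m, hty2⟩ := fst_corner hdD
    rcases tri m (by omega) with ⟨k, hk, hdG⟩ | ⟨j, hj, hdP⟩ | hDm
    · obtain ⟨a1, b1, ha1', hb1', he2m, -⟩ := snd_corner hdG
      rw [he2m, he1m] at hadjm
      exact absurd hadjm (fun hh => geo_GD hp hk hk2 ha1' hb1' ha2' hb2' hh)
    · obtain ⟨a1, b1, ha1', hb1', he2m, hty1⟩ := snd_corner hdP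
      rw [he2m, he1m] at hadjm
      rcases geo_PD hj hk2 ha1' hb1' ha2' hb2' hadjm with
        ⟨hjp, ha11, hb10, hk0, hab⟩ | ⟨hk0, ha20, hb21⟩
      · left
        constructor
        · rcases hty2 with ⟨hdd, hee⟩ | ⟨hdd, hee⟩
          · rw [show ((g:ℤ)+(p:ℤ)+(k2:ℤ), -(g:ℤ)-1-(k2:ℤ)) = ((g:ℤ)+(p:ℤ), -(g:ℤ)-1)
              by rw [Prod.mk.injEq]; omega] at hdd
            exact hdd
          · exfalso; omega
        · rcases hty1 with ⟨hdd, hee⟩ | ⟨hdd, hee⟩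
          · exfalso; omega
          · rw [show ((g:ℤ)+(j:ℤ), -(g:ℤ)) = ((g:ℤ)+(p:ℤ)-1, -(g:ℤ))
              by rw [Prod.mk.injEq]; omega] at hdd
            exact hdd
      · right
        rcases hty2 with ⟨hdd, hee⟩ | ⟨hdd, hee⟩
        · exfalso; omega
        · rw [show ((g:ℤ)+(p:ℤ)+(k2:ℤ), -(g:ℤ)-1-(k2:ℤ)) = ((g:ℤ)+(p:ℤ), -(g:ℤ)-1)
            by rw [Prod.mk.injEq]; omega] at hdd
          exact hdd
    · exact absurd hDm hnDm
  have exitD : ∀ m, m + 1 < N →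
      (∃ k < d, IsDiagOf (d' m) ((g:ℤ)+(p:ℤ)+(k:ℤ), -(g:ℤ)-1-(k:ℤ))) →
      (¬ ∃ k < d, IsDiagOf (d' (m+1)) ((g:ℤ)+(p:ℤ)+(k:ℤ), -(g:ℤ)-1-(k:ℤ))) →
      diagOf (d' (m+1)) = supDiag ((g:ℤ)+(p:ℤ)-1, -(g:ℤ)) ∨
      diagOf (d' m) = supDiag ((g:ℤ)+(p:ℤ), -(g:ℤ)-1) := by
    intro m hmN hDm hnD
    have hadjm := h5 m hmN
    obtain ⟨k2, hk2, hdD⟩ := hDm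
    obtain ⟨a1, b1, ha1', hb1', he2m, hty1⟩ := snd_corner hdD
    rcases tri (m+1) (by omega) with ⟨k, hk, hdG⟩ | ⟨j, hj, hdP⟩ | hDm1
    · obtain ⟨a2, b2, ha2', hb2', he1m, -⟩ := fst_corner hdG
      rw [he2m, he1m] at hadjm
      exact absurd (adj_symm hadjm) (fun hh => geo_GD hp hk hk2 ha2' hb2' ha1' hb1' hh)
    · obtain ⟨a2, b2, ha2', hb2', he1m, hty2⟩ := fst_corner hdP
      rw [he2m, he1m] at hadjm
      rcases geo_DP hk2 hj ha1' hb1' ha2' hb2' hadjm with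
        ⟨hk0, ha10, hb11⟩ | ⟨hjp, ha21, hb20, hk0, hab⟩
      · right
        rcases hty1 with ⟨hdd, hee⟩ | ⟨hdd, hee⟩
        · exfalso; omega
        · rw [show ((g:ℤ)+(p:ℤ)+(k2:ℤ), -(g:ℤ)-1-(k2:ℤ)) = ((g:ℤ)+(p:ℤ), -(g:ℤ)-1)
            by rw [Prod.mk.injEq]; omega] at hdd
          exact hdd
      · left
        rcases hty2 with ⟨hdd, hee⟩ | ⟨hdd, hee⟩
        · exfalso; omega
        · rw [show ((g:ℤ)+(j:ℤ), -(g:ℤ)) = ((g:ℤ)+(p:ℤ)-1, -(g:ℤ))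
            by rw [Prod.mk.injEq]; omega] at hdd
          exact hdd
    · exact absurd hDm1 hnD
  -- first D index
  have hexD : ∃ i, i < N ∧ ∃ k < d, IsDiagOf (d' i) ((g:ℤ)+(p:ℤ)+(k:ℤ), -(g:ℤ)-1-(k:ℤ)) := by
    obtain ⟨iD, hiDN, hiDd⟩ := exInf _ memD1
    refine ⟨iD, hiDN, 0, by omega, Or.inl ?_⟩
    rw [show ((g:ℤ)+(p:ℤ)+((0:ℕ):ℤ), -(g:ℤ)-1-((0:ℕ):ℤ)) = ((g:ℤ)+(p:ℤ), -(g:ℤ)-1)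
      by rw [Prod.mk.injEq]; omega]
    exact hiDd
  obtain ⟨jD, hjDN, hjDD, hjmin⟩ : ∃ jD, jD < N ∧
      (∃ k < d, IsDiagOf (d' jD) ((g:ℤ)+(p:ℤ)+(k:ℤ), -(g:ℤ)-1-(k:ℤ))) ∧
      ∀ i, i < jD → ¬ ∃ k < d, IsDiagOf (d' i) ((g:ℤ)+(p:ℤ)+(k:ℤ), -(g:ℤ)-1-(k:ℤ)) := by
    refine ⟨Nat.find hexD, (Nat.find_spec hexD).1, (Nat.find_spec hexD).2, ?_⟩
    intro i hi hDi
    exact Nat.find_min hexD hi ⟨lt_trans hi (Nat.find_spec hexD).1, hDi⟩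
  have hjD1 : 0 < jD := by
    rcases Nat.eq_zero_or_pos jD with hh | hh
    · exfalso
      obtain ⟨k, hk, hdk⟩ := hjDD
      rw [hh] at hdk
      have h := diag_cell_eq (Or.inl h0) hdk
      rw [Prod.mk.injEq] at h
      omega
    · exact hh
  obtain ⟨bD, rfl⟩ : ∃ m, jD = m + 1 := ⟨jD - 1, by omega⟩
  obtain ⟨hD1j, hPpj⟩ : diagOf (d' (bD+1)) = infDiag ((g:ℤ)+(p:ℤ), -(g:ℤ)-1) ∧
      diagOf (d' bD) = supDiag ((g:ℤ)+(p:ℤ)-1, -(g:ℤ)) := by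
    rcases entryD bD hjDN (hjmin bD (by omega)) hjDD with h | hsupj
    · exact h
    · exfalso
      obtain ⟨iI, hiIN, hiId⟩ := exInf _ memD1
      have hlt := h4 _ memD1 iI (bD+1) hiIN hjDN hiId hsupj
      refine hjmin iI (by omega) ⟨0, by omega, Or.inl ?_⟩
      rw [show ((g:ℤ)+(p:ℤ)+((0:ℕ):ℤ), -(g:ℤ)-1-((0:ℕ):ℤ)) = ((g:ℤ)+(p:ℤ), -(g:ℤ)-1)
        by rw [Prod.mk.injEq]; omega]
      exact hiId
  obtain ⟨i2, hi2N, hi2d⟩ := exInf _ memD2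
  have hi2D : ∃ k < d, IsDiagOf (d' i2) ((g:ℤ)+(p:ℤ)+(k:ℤ), -(g:ℤ)-1-(k:ℤ)) := by
    refine ⟨1, by omega, Or.inl ?_⟩
    rw [show ((g:ℤ)+(p:ℤ)+((1:ℕ):ℤ), -(g:ℤ)-1-((1:ℕ):ℤ)) = ((g:ℤ)+(p:ℤ)+1, -(g:ℤ)-2)
      by rw [Prod.mk.injEq]; omega]
    exact hi2d
  have hi2j : bD + 1 ≤ i2 := by
    by_contra hh
    exact hjmin i2 (by omega) hi2D
  have hi2j1 : i2 ≠ bD + 1 := by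
    intro hh
    rw [hh] at hi2d
    have h := inf_inj (hD1j.symm.trans hi2d)
    rw [Prod.mk.injEq] at h
    omega
  have hDall : ∀ i, bD + 1 ≤ i → i < N →
      ∃ k < d, IsDiagOf (d' i) ((g:ℤ)+(p:ℤ)+(k:ℤ), -(g:ℤ)-1-(k:ℤ)) := by
    by_contra hcon
    push_neg at hcon
    obtain ⟨i, hji, hiN, hnDi⟩ := hcon
    have hex2 : ∃ m, bD + 1 ≤ m ∧ m < N ∧
        ¬ ∃ k < d, IsDiagOf (d' m) ((g:ℤ)+(p:ℤ)+(k:ℤ), -(g:ℤ)-1-(k:ℤ)) :=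
      ⟨i, hji, hiN, by push_neg; exact hnDi⟩
    have hsp := Nat.find_spec hex2
    have hk0min : ∀ i', bD + 1 ≤ i' → i' < Nat.find hex2 → i' < N →
        ∃ k < d, IsDiagOf (d' i') ((g:ℤ)+(p:ℤ)+(k:ℤ), -(g:ℤ)-1-(k:ℤ)) := by
      intro i' h1' h2' h3'
      by_contra hh
      exact Nat.find_min hex2 h2' ⟨h1', h3', hh⟩
    have hk0ne : Nat.find hex2 ≠ bD + 1 := by
      intro hh
      rw [hh] at hsp
      refine hsp.2.2 ⟨0, by omega, Or.inl ?_⟩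
      rw [show ((g:ℤ)+(p:ℤ)+((0:ℕ):ℤ), -(g:ℤ)-1-((0:ℕ):ℤ)) = ((g:ℤ)+(p:ℤ), -(g:ℤ)-1)
        by rw [Prod.mk.injEq]; omega]
      exact hD1j
    obtain ⟨m, hm⟩ : ∃ m, Nat.find hex2 = m + 1 := ⟨Nat.find hex2 - 1, by omega⟩
    rw [hm] at hsp hk0min hk0ne
    obtain ⟨hk0b, hk0N, hk0nD⟩ := hsp
    have hmb : bD + 1 ≤ m := by omega
    have hDm : ∃ k < d, IsDiagOf (d' m) ((g:ℤ)+(p:ℤ)+(k:ℤ), -(g:ℤ)-1-(k:ℤ)) :=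
      hk0min m hmb (by omega) (by omega)
    rcases exitD m (by omega) hDm hk0nD with hPp | hsupm
    · have := uSup _ memPp (m+1) bD (by omega) (by omega) hPp hPpj
      omega
    · by_cases hmj : m = bD + 1
      · rw [hmj] at hsupm
        exact inf_ne_sup (hD1j.symm.trans hsupm)
      · have hmgt : bD + 2 ≤ m := by omega
        have hadjj : Adj (d' (bD+1)).2 (d' (bD+2)).1 := h5 (bD+1) (by omega)
        obtain ⟨k4, hk4, hd4⟩ := hk0min (bD+2) (by omega) (by omega) (by omega)
        obtain ⟨a1, b1, ha1', hb1', he2j, hty1⟩ :=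
          snd_corner (Or.inl hD1j : IsDiagOf (d' (bD+1)) ((g:ℤ)+(p:ℤ), -(g:ℤ)-1))
        have hab1 : a1 = b1 := by
          rcases hty1 with ⟨-, hee⟩ | ⟨hdd, -⟩
          · exact hee
          · exact absurd (hD1j.symm.trans hdd) inf_ne_sup
        obtain ⟨a2, b2, ha2', hb2', he1j, hty4⟩ := fst_corner hd4
        rw [he2j, he1j] at hadjj
        have hsupj2 : diagOf (d' (bD+2)) = supDiag ((g:ℤ)+(p:ℤ), -(g:ℤ)-1) := by
          rcases geo_DD hk4 ha1' hb1' hab1 ha2' hb2' hadjj with ⟨hk40, hab⟩ | ⟨hk41, ha20, hb21⟩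
          · rcases hty4 with ⟨hdd, hee⟩ | ⟨hdd, hee⟩
            · exfalso; omega
            · rw [show ((g:ℤ)+(p:ℤ)+(k4:ℤ), -(g:ℤ)-1-(k4:ℤ)) = ((g:ℤ)+(p:ℤ), -(g:ℤ)-1)
                by rw [Prod.mk.injEq]; omega] at hdd
              exact hdd
          · exfalso
            rcases hty4 with ⟨hdd, hee⟩ | ⟨hdd, hee⟩
            · omega
            · rw [show ((g:ℤ)+(p:ℤ)+(k4:ℤ), -(g:ℤ)-1-(k4:ℤ)) = ((g:ℤ)+(p:ℤ)+1, -(g:ℤ)-2)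
                by rw [Prod.mk.injEq]; omega] at hdd
              have hlt := h4 _ memD2 i2 (bD+2) hi2N (by omega) hi2d hdd
              omega
        have hmeq := uSup _ memD1 m (bD+2) (by omega) (by omega) hsupm hsupj2
        have hi2ne2 : i2 ≠ bD + 2 := by
          intro hh
          rw [hh] at hi2d
          exact inf_ne_sup (hi2d.symm.trans hsupj2)
        have hi2gt : m + 1 < i2 := by
          have hne1 : i2 ≠ m + 1 := by
            intro hh
            rw [hh] at hi2D
            exact hk0nD hi2D
          omega
        have hex3 : ∃ i', m + 2 ≤ i' ∧ i' < N ∧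
            ∃ k < d, IsDiagOf (d' i') ((g:ℤ)+(p:ℤ)+(k:ℤ), -(g:ℤ)-1-(k:ℤ)) :=
          ⟨i2, by omega, hi2N, hi2D⟩
        have hsp3 := Nat.find_spec hex3
        have hm1min : ∀ i', m + 2 ≤ i' → i' < Nat.find hex3 → i' < N →
            ¬ ∃ k < d, IsDiagOf (d' i') ((g:ℤ)+(p:ℤ)+(k:ℤ), -(g:ℤ)-1-(k:ℤ)) := by
          intro i' h1' h2' h3' hh
          exact Nat.find_min hex3 h2' ⟨h1', h3', hh⟩
        have hm1pos : 0 < Nat.find hex3 := by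
          have := hsp3.1
          omega
        obtain ⟨m2, hm2⟩ : ∃ m2, Nat.find hex3 = m2 + 1 := ⟨Nat.find hex3 - 1, by omega⟩
        rw [hm2] at hsp3 hm1min
        obtain ⟨hm1b, hm1N, hm1D⟩ := hsp3
        have hnDm2 : ¬ ∃ k < d, IsDiagOf (d' m2) ((g:ℤ)+(p:ℤ)+(k:ℤ), -(g:ℤ)-1-(k:ℤ)) := by
          by_cases hc2 : m2 = m + 1
          · rw [hc2]; exact hk0nD
          · exact hm1min m2 (by omega) (by omega) (by omega)
        rcases entryD m2 (by omega) hnDm2 hm1D with ⟨hinf, -⟩ | hsup2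
        · have := uInf _ memD1 (m2+1) (bD+1) (by omega) (by omega) hinf hD1j
          omega
        · have := uSup _ memD1 (m2+1) (bD+2) (by omega) (by omega) hsup2 hsupj2
          omega
  -- counting for D
  have hcard2d : bD + 1 = 2 * (g + p) := by
    have hdisj : Disjoint
        ((Finset.range d).image fun k : ℕ => infDiag ((g:ℤ)+(p:ℤ)+(k:ℤ), -(g:ℤ)-1-(k:ℤ)))
        ((Finset.range d).image fun k : ℕ => supDiag ((g:ℤ)+(p:ℤ)+(k:ℤ), -(g:ℤ)-1-(k:ℤ))) := by
      rw [Finset.disjoint_left]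
      rintro q hq hq'
      obtain ⟨k, -, rfl⟩ := Finset.mem_image.mp hq
      obtain ⟨k', -, hk'⟩ := Finset.mem_image.mp hq'
      exact inf_ne_sup hk'.symm
    have hinj1 : Set.InjOn (fun k : ℕ => infDiag ((g:ℤ)+(p:ℤ)+(k:ℤ), -(g:ℤ)-1-(k:ℤ)))
        (Finset.range d) := by
      intro x _ y _ hxy
      have h := inf_inj hxy
      rw [Prod.mk.injEq] at h
      omega
    have hinj2 : Set.InjOn (fun k : ℕ => supDiag ((g:ℤ)+(p:ℤ)+(k:ℤ), -(g:ℤ)-1-(k:ℤ)))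
        (Finset.range d) := by
      intro x _ y _ hxy
      have h := sup_inj hxy
      rw [Prod.mk.injEq] at h
      omega
    have hbij : (Finset.Ico (bD+1) N).card =
        (((Finset.range d).image fun k : ℕ => infDiag ((g:ℤ)+(p:ℤ)+(k:ℤ), -(g:ℤ)-1-(k:ℤ))) ∪
         ((Finset.range d).image fun k : ℕ => supDiag ((g:ℤ)+(p:ℤ)+(k:ℤ), -(g:ℤ)-1-(k:ℤ)))).card := by
      apply Finset.card_bij (fun i _ => diagOf (d' i))
      · intro i hi
        rw [Finset.mem_Ico] at hi
        obtain ⟨k, hk, hdk⟩ := hDall i hi.1 hi.2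
        rcases hdk with hdk | hdk
        · exact Finset.mem_union_left _
            (Finset.mem_image.mpr ⟨k, Finset.mem_range.mpr hk, hdk.symm⟩)
        · exact Finset.mem_union_right _
            (Finset.mem_image.mpr ⟨k, Finset.mem_range.mpr hk, hdk.symm⟩)
      · intro i hi i' hi' hdd
        rw [Finset.mem_Ico] at hi hi'
        obtain ⟨k, hk, hdk⟩ := hDall i hi.1 hi.2
        rcases hdk with hdk | hdk
        · exact uInf _ (memD k hk) i i' hi.2 hi'.2 hdk (hdd.symm.trans hdk)
        · exact uSup _ (memD k hk) i i' hi.2 hi'.2 hdk (hdd.symm.trans hdk)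
      · intro q hq
        rcases Finset.mem_union.mp hq with hq' | hq'
        · obtain ⟨k, hkr, rfl⟩ := Finset.mem_image.mp hq'
          obtain ⟨iq, hiqN, hiqd⟩ := exInf _ (memD k (Finset.mem_range.mp hkr))
          refine ⟨iq, Finset.mem_Ico.mpr ⟨?_, hiqN⟩, hiqd⟩
          by_contra hniq
          exact hjmin iq (by omega) ⟨k, Finset.mem_range.mp hkr, Or.inl hiqd⟩
        · obtain ⟨k, hkr, rfl⟩ := Finset.mem_image.mp hq'
          obtain ⟨iq, hiqN, hiqd⟩ := exSup _ (memD k (Finset.mem_range.mp hkr))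
          refine ⟨iq, Finset.mem_Ico.mpr ⟨?_, hiqN⟩, hiqd⟩
          by_contra hniq
          exact hjmin iq (by omega) ⟨k, Finset.mem_range.mp hkr, Or.inr hiqd⟩
    rw [Nat.card_Ico, Finset.card_union_of_disjoint hdisj,
      Finset.card_image_of_injOn hinj1, Finset.card_image_of_injOn hinj2,
      Finset.card_range] at hbij
    omega
  -- ==================== conclusion ====================
  refine ⟨?_, ?_, ?_⟩
  · intro i hi
    exact hGbelow i (by omega)
  · intro i hi1 hi2
    have hiN : i < N := by omega
    rcases tri i hiN with hG | hP | hD'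
    · exact absurd hG (hGabove i (by omega) hiN)
    · exact hP
    · exact absurd hD' (hjmin i (by omega))
  · intro i hi1 hi2
    exact hDall i (by omega) (by omega)
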